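/- arXiv:1308.2662 — 2 statements merged into one kernel-verified Lean document; each statement's English description precedes it below -/
import Mathlib

section
/- Let W := {W(f_{λ;1},…,f_{λ;m})}_{λ∈ℂ^N}, where f_{λ;k} := P_k e^{Q_k}, be the family of Wronskians of the families {P_k e^{Q_k}}_{λ∈ℂ^N} of generalized exponential polynomial summands, regarded as a family of holomorphic functions on the unit disk depending holomorphically (polynomially) on λ ∈ ℂ^N. Then for every point μ ∈ ℂ^N the cyclicity of W at μ satisfies c(W;μ) ≤ mp + (1/2)m(m−1)(q−1). -/
open Metric

/-- The order of vanishing of `f` at `z` (the least `n` with nonzero `n`-th derivative). -/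
noncomputable def ordAt (f : ℂ → ℂ) (z : ℂ) : ℕ :=
  sInf {n : ℕ | iteratedDeriv n f z ≠ 0}

/-- `f` has at most `κ` zeros in the disk `D_δ`, counting multiplicities. -/
def AtMostZeros (f : ℂ → ℂ) (δ : ℝ) (κ : ℕ) : Prop :=
  ∀ S : Finset ℂ, (S : Set ℂ) ⊆ Metric.ball (0 : ℂ) δ → ∑ z ∈ S, ordAt f z ≤ κ

/-- `f` has exactly `κ` zeros in the disk `D_δ`, counting multiplicities. -/
def ExactZeros (f : ℂ → ℂ) (δ : ℝ) (κ : ℕ) : Prop :=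
  AtMostZeros f δ κ ∧
    ∃ S : Finset ℂ, (S : Set ℂ) ⊆ Metric.ball (0 : ℂ) δ ∧ ∑ z ∈ S, ordAt f z = κ

/-- The central set `C(F;V)` of the family `{f_λ}_{λ∈V}` of functions on `D_ρ`. -/
def centralSet {Λ : Type*} (ρ : ℝ) (V : Set Λ) (f : Λ → ℂ → ℂ) : Set Λ :=
  {l | l ∈ V ∧ ∀ z ∈ Metric.ball (0 : ℂ) ρ, f l z = 0}

/-- The family `{f_λ}_{λ∈V}` of holomorphic functions on `D_ρ` has cyclicity `κ`
on the compact set `K ⊆ V` (Bautin-type definition). -/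
def HasCyclicity {Λ : Type*} [PseudoMetricSpace Λ] (ρ : ℝ) (V : Set Λ)
    (f : Λ → ℂ → ℂ) (K : Set Λ) (κ : ℕ) : Prop :=
  ∃ ε₀ > (0 : ℝ), ∃ δ₀ > (0 : ℝ), δ₀ ≤ ρ ∧
    (∀ l ∈ (⋃ μ ∈ K, Metric.ball μ ε₀) ∩ (V \ centralSet ρ V f),
      AtMostZeros (f l) δ₀ κ) ∧
    (∀ ε ∈ Set.Ioo (0 : ℝ) ε₀, ∀ δ ∈ Set.Ioo (0 : ℝ) δ₀,
      ∃ l ∈ (⋃ μ ∈ K, Metric.ball μ ε) ∩ (V \ centralSet ρ V f),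
        ExactZeros (f l) δ κ)

/-- The Wronskian determinant `W(g_1,…,g_l)`. -/
noncomputable def wronskian {l : ℕ} (g : Fin l → ℂ → ℂ) (z : ℂ) : ℂ :=
  Matrix.det (Matrix.of fun i j : Fin l => iteratedDeriv (i : ℕ) (g j) z)

/-- The index set for the parameter space `ℂ^N`, `N = m(p+q+1)`: a parameter is a string
`((c_{ki})_{0≤i≤p},(d_{kj})_{1≤j≤q})_{1≤k≤m}`.  `Sum.inl (k,i)` indexes `c_{ki}` and
`Sum.inr (k,j)` indexes `d_{k(j+1)}`. -/
abbrev GEPIdx (p q m : ℕ) := (Fin m × Fin (p + 1)) ⊕ (Fin m × Fin q)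

/-- The polynomial `P_k(z) = ∑_{i=0}^p c_{ki} z^i` determined by the parameter `l`. -/
noncomputable def gepP (p q m : ℕ) (l : GEPIdx p q m → ℂ) (k : Fin m) : Polynomial ℂ :=
  ∑ i : Fin (p + 1), Polynomial.C (l (Sum.inl (k, i))) * Polynomial.X ^ (i : ℕ)

/-- The polynomial `Q_k(z) = ∑_{j=1}^q d_{kj} z^j` determined by the parameter `l`. -/
noncomputable def gepQ (p q m : ℕ) (l : GEPIdx p q m → ℂ) (k : Fin m) : Polynomial ℂ :=
  ∑ j : Fin q, Polynomial.C (l (Sum.inr (k, j))) * Polynomial.X ^ ((j : ℕ) + 1)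

/-- The generalized exponential polynomial `f_λ(z) = ∑_{k=1}^m P_k(z) e^{Q_k(z)}`. -/
noncomputable def gep (p q m : ℕ) (l : GEPIdx p q m → ℂ) (z : ℂ) : ℂ :=
  ∑ k : Fin m, (gepP p q m l k).eval z * Complex.exp ((gepQ p q m l k).eval z)

/-- The `n`-th Maclaurin coefficient `a_n(λ)` of `f_λ`. -/
noncomputable def gepCoeff (p q m : ℕ) (n : ℕ) (l : GEPIdx p q m → ℂ) : ℂ :=
  iteratedDeriv n (gep p q m l) 0 / n.factorial

/-- `c_{p,q,m} := m − 1 + mp + (1/2)m(m−1)(q−1)`. -/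
def cpqm (p q m : ℕ) : ℕ := (m - 1) + m * p + m * (m - 1) * (q - 1) / 2

open Finset Polynomial


lemma contDiff_polyEval (T : ℂ[X]) : ContDiff ℂ (⊤ : ℕ∞) (fun w => T.eval w) := by
  have : (fun w : ℂ => T.eval w)
      = fun w => ∑ i ∈ range (T.natDegree + 1), T.coeff i * w ^ i := by
    funext w; exact T.eval_eq_sum_range w
  rw [this]
  exact ContDiff.sum fun i _ => contDiff_const.mul (contDiff_id.pow i)

lemma diffble_iteratedDeriv {f : ℂ → ℂ} (hf : ContDiff ℂ (⊤ : ℕ∞) f) (k : ℕ) :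
    Differentiable ℂ (iteratedDeriv k f) := by
  rw [iteratedDeriv_eq_iterate]
  exact (hf.iterate_deriv k).differentiable (by simp)

lemma pascal_sum (a b : ℕ → ℂ) (n : ℕ) :
    ∑ k ∈ range (n + 2), ((n + 1).choose k : ℂ) * a k * b (n + 1 - k)
      = ∑ k ∈ range (n + 1), (n.choose k : ℂ) * a (k + 1) * b (n - k)
        + ∑ k ∈ range (n + 1), (n.choose k : ℂ) * a k * b (n + 1 - k) := by
  have e0 : ∑ k ∈ range (n + 2), ((n + 1).choose k : ℂ) * a k * b (n + 1 - k)
      = ∑ k ∈ range (n + 1), ((n + 1).choose (k+1) : ℂ) * a (k+1) * b (n - k)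
        + a 0 * b (n + 1) := by
    rw [Finset.sum_range_succ']
    simp only [Nat.choose_zero_right, Nat.cast_one, one_mul, Nat.sub_zero]
    congr 1
    refine Finset.sum_congr rfl fun k _ => ?_
    congr 2
    omega
  have e1 : ∑ k ∈ range (n + 1), ((n + 1).choose (k+1) : ℂ) * a (k+1) * b (n - k)
      = ∑ k ∈ range (n + 1), (n.choose k : ℂ) * a (k + 1) * b (n - k)
        + ∑ k ∈ range (n + 1), (n.choose (k+1) : ℂ) * a (k+1) * b (n - k) := by
    rw [← Finset.sum_add_distrib]
    refine Finset.sum_congr rfl fun k _ => ?_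
    rw [Nat.choose_succ_succ]
    push_cast; ring
  have e2 : ∑ k ∈ range (n + 1), (n.choose (k+1) : ℂ) * a (k+1) * b (n - k) + a 0 * b (n + 1)
      = ∑ k ∈ range (n + 1), (n.choose k : ℂ) * a k * b (n + 1 - k) := by
    have h := Finset.sum_range_succ' (fun k => (n.choose k : ℂ) * a k * b (n + 1 - k)) (n + 1)
    rw [Finset.sum_range_succ (fun k => (n.choose k : ℂ) * a k * b (n + 1 - k)) (n + 1)] at h
    simp only [Nat.choose_succ_self, Nat.cast_zero, zero_mul, add_zero, Nat.choose_zero_right,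
      Nat.cast_one, one_mul, Nat.sub_zero] at h
    rw [h]
    congr 1
    refine Finset.sum_congr rfl fun k _ => ?_
    congr 2
    omega
  rw [e0, e1, add_assoc, e2]

lemma leibniz {f g : ℂ → ℂ} (hf : ContDiff ℂ (⊤ : ℕ∞) f) (hg : ContDiff ℂ (⊤ : ℕ∞) g)
    (n : ℕ) (z : ℂ) :
    iteratedDeriv n (fun w => f w * g w) z
      = ∑ k ∈ range (n + 1),
          (n.choose k : ℂ) * iteratedDeriv k f z * iteratedDeriv (n - k) g z := by
  induction n generalizing z with
  | zero => simp
  | succ n ih =>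
    rw [iteratedDeriv_succ]
    have hfun : iteratedDeriv n (fun w => f w * g w)
        = fun z => ∑ k ∈ range (n + 1),
            (n.choose k : ℂ) * iteratedDeriv k f z * iteratedDeriv (n - k) g z := funext ih
    rw [hfun]
    have hdf : ∀ k x, DifferentiableAt ℂ (iteratedDeriv k f) x := fun k x =>
      (diffble_iteratedDeriv hf k).differentiableAt
    have hdg : ∀ k x, DifferentiableAt ℂ (iteratedDeriv k g) x := fun k x =>
      (diffble_iteratedDeriv hg k).differentiableAt
    rw [deriv_fun_sum (fun k _ => by
      exact (((hdf k z).const_mul _).mul (hdg (n - k) z)))]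
    have step : ∀ k, deriv (fun z => (n.choose k : ℂ) * iteratedDeriv k f z
        * iteratedDeriv (n - k) g z) z
        = (n.choose k : ℂ) * iteratedDeriv (k + 1) f z * iteratedDeriv (n - k) g z
          + (n.choose k : ℂ) * iteratedDeriv k f z * iteratedDeriv (n - k + 1) g z := by
      intro k
      rw [deriv_fun_mul ((hdf k z).const_mul _) (hdg (n - k) z),
        deriv_const_mul _ (hdf k z), ← iteratedDeriv_succ, ← iteratedDeriv_succ]
    simp only [step]
    rw [Finset.sum_add_distrib, pascal_sum (fun k => iteratedDeriv k f z)
      (fun k => iteratedDeriv k g z) n]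
    congr 1
    refine Finset.sum_congr rfl fun k hk => ?_
    congr 2
    rw [Finset.mem_range] at hk
    omega

lemma iteratedDeriv_polyEval (T : ℂ[X]) (k : ℕ) (z : ℂ) :
    iteratedDeriv k (fun w => T.eval w) z = (derivative^[k] T).eval z := by
  induction k generalizing z with
  | zero => simp
  | succ k ih =>
    rw [iteratedDeriv_succ]
    have : iteratedDeriv k (fun w => T.eval w) = fun z => (derivative^[k] T).eval z := funext ih
    rw [this, Function.iterate_succ_apply', Polynomial.deriv]

lemma ordAt_mul_le (T : ℂ[X]) (hT : T ≠ 0) {g : ℂ → ℂ} (hg : ContDiff ℂ (⊤ : ℕ∞) g) (z : ℂ)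
    (hgz : g z ≠ 0) : ordAt (fun w => T.eval w * g w) z ≤ T.rootMultiplicity z := by
  apply Nat.sInf_le
  set r := T.rootMultiplicity z with hr
  show iteratedDeriv r (fun w => T.eval w * g w) z ≠ 0
  rw [leibniz (contDiff_polyEval T) hg r z]
  rw [Finset.sum_eq_single_of_mem r (Finset.self_mem_range_succ r)]
  · rw [Nat.choose_self, Nat.cast_one, one_mul, Nat.sub_self, iteratedDeriv_zero,
      iteratedDeriv_polyEval]
    apply mul_ne_zero _ hgz
    rw [Polynomial.eval_iterate_derivative_rootMultiplicity]
    simp only [nsmul_eq_mul]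
    exact mul_ne_zero (Nat.cast_ne_zero.mpr (Nat.factorial_ne_zero _))
      (Polynomial.eval_divByMonic_pow_rootMultiplicity_ne_zero z hT)
  · intro k hk hkr
    rw [iteratedDeriv_polyEval]
    have hklt : k < r := lt_of_le_of_ne (Nat.lt_succ_iff.mp (Finset.mem_range.mp hk)) hkr
    have := Polynomial.isRoot_iterate_derivative_of_lt_rootMultiplicity hklt
    rw [Polynomial.IsRoot] at this
    rw [this]
    ring

lemma sum_count_le (S : Finset ℂ) (M : Multiset ℂ) :
    ∑ z ∈ S, M.count z ≤ Multiset.card M := by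
  classical
  have h1 : ∑ z ∈ S, M.count z = ∑ z ∈ S.filter (· ∈ M.toFinset), M.count z := by
    refine (Finset.sum_filter_of_ne ?_).symm
    intro x _ hx
    rwa [Multiset.mem_toFinset, ← Multiset.count_ne_zero]
  rw [h1]
  calc ∑ z ∈ S.filter (· ∈ M.toFinset), M.count z
      ≤ ∑ z ∈ M.toFinset, M.count z :=
        Finset.sum_le_sum_of_subset (fun x hx => (Finset.mem_filter.mp hx).2)
    _ = Multiset.card M := Multiset.toFinset_sum_count_eq M

lemma natDegree_det_le {m : ℕ} (A : Matrix (Fin m) (Fin m) ℂ[X]) (p e : ℕ)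
    (h : ∀ i j, (A i j).natDegree ≤ p + (i : ℕ) * e) :
    A.det.natDegree ≤ m * p + e * (m * (m - 1) / 2) := by
  rw [Matrix.det_apply']
  apply Polynomial.natDegree_sum_le_of_forall_le
  intro σ _
  calc (((Equiv.Perm.sign σ : ℤ) : ℂ[X]) * ∏ i, A (σ i) i).natDegree
      ≤ (((Equiv.Perm.sign σ : ℤ) : ℂ[X])).natDegree + (∏ i, A (σ i) i).natDegree :=
        Polynomial.natDegree_mul_le
    _ ≤ 0 + ∑ i, (A (σ i) i).natDegree := by
        gcongr
        · exact (Polynomial.natDegree_intCast _).le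
        · exact Polynomial.natDegree_prod_le _ _
    _ ≤ ∑ i : Fin m, (p + (σ i : ℕ) * e) := by
        rw [zero_add]; exact Finset.sum_le_sum fun i _ => h (σ i) i
    _ = m * p + e * (m * (m - 1) / 2) := by
        rw [Finset.sum_add_distrib, Finset.sum_const, Finset.card_univ, Fintype.card_fin,
          smul_eq_mul, ← Finset.sum_mul]
        congr 1
        rw [Equiv.sum_comp σ (fun i : Fin m => (i : ℕ)), mul_comm]
        congr 1
        rw [show (∑ i : Fin m, (i : ℕ)) = ∑ i ∈ Finset.range m, i from
          Fin.sum_univ_eq_sum_range (fun i => i) m, Finset.sum_range_id]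

/-- Auxiliary polynomial recursion: the `n`-th derivative of `P e^Q` is `(gepAux Q n P) e^Q`. -/
noncomputable def gepAux (Q : ℂ[X]) : ℕ → ℂ[X] → ℂ[X]
  | 0, P => P
  | n + 1, P => derivative (gepAux Q n P) + gepAux Q n P * derivative Q

lemma iteratedDeriv_poly_mul_exp (P Q : ℂ[X]) (n : ℕ) (z : ℂ) :
    iteratedDeriv n (fun w => P.eval w * Complex.exp (Q.eval w)) z
      = (gepAux Q n P).eval z * Complex.exp (Q.eval z) := by
  induction n generalizing z with
  | zero => simp [gepAux]
  | succ n ih =>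
    rw [iteratedDeriv_succ]
    have hfun : iteratedDeriv n (fun w => P.eval w * Complex.exp (Q.eval w))
        = fun z => (gepAux Q n P).eval z * Complex.exp (Q.eval z) := funext ih
    rw [hfun]
    have hA := (gepAux Q n P).hasDerivAt z
    have hE := (Q.hasDerivAt z).cexp
    have := (hA.fun_mul hE).deriv
    rw [this]
    show _ = (gepAux Q (n + 1) P).eval z * _
    simp only [gepAux, Polynomial.eval_add, Polynomial.eval_mul]
    ring

lemma natDegree_gepAux_le (P Q : ℂ[X]) (p q n : ℕ) (hP : P.natDegree ≤ p)
    (hQ : Q.natDegree ≤ q) : (gepAux Q n P).natDegree ≤ p + n * (q - 1) := by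
  induction n with
  | zero => simpa [gepAux] using hP
  | succ n ih =>
    show (derivative (gepAux Q n P) + gepAux Q n P * derivative Q).natDegree ≤ _
    apply le_trans (Polynomial.natDegree_add_le _ _)
    apply max_le
    · exact le_trans (Polynomial.natDegree_derivative_le _)
        (le_trans (Nat.sub_le _ _) (le_trans ih (by nlinarith)))
    · apply le_trans Polynomial.natDegree_mul_le
      have h1 : (derivative Q).natDegree ≤ q - 1 :=
        le_trans (Polynomial.natDegree_derivative_le Q) (Nat.sub_le_sub_right hQ 1)
      calc (gepAux Q n P).natDegree + (derivative Q).natDegree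
          ≤ (p + n * (q - 1)) + (q - 1) := add_le_add ih h1
        _ = p + (n + 1) * (q - 1) := by ring

lemma wronskian_factor {m : ℕ} (P Q : Fin m → ℂ[X]) (z : ℂ) :
    _root_.wronskian (fun k : Fin m => fun w => (P k).eval w * Complex.exp ((Q k).eval w)) z
      = (Matrix.det (Matrix.of fun i j : Fin m => gepAux (Q j) (i : ℕ) (P j))).eval z
          * Complex.exp ((∑ k, Q k).eval z) := by
  unfold _root_.wronskian
  have hentry : (Matrix.of fun i j : Fin m => iteratedDeriv (i : ℕ)
      (fun w => (P j).eval w * Complex.exp ((Q j).eval w)) z)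
      = (Matrix.of fun i j : Fin m => (gepAux (Q j) (i : ℕ) (P j)).eval z)
        * Matrix.diagonal (fun j => Complex.exp ((Q j).eval z)) := by
    ext i j
    rw [Matrix.mul_diagonal]
    exact iteratedDeriv_poly_mul_exp (P j) (Q j) i z
  rw [hentry, Matrix.det_mul, Matrix.det_diagonal]
  congr 1
  · rw [← Polynomial.coe_evalRingHom, RingHom.map_det]
    rfl
  · rw [Polynomial.eval_finset_sum, Complex.exp_sum]

lemma natDegree_gepP_le (p q m : ℕ) (l : GEPIdx p q m → ℂ) (k : Fin m) :
    (gepP p q m l k).natDegree ≤ p := by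
  apply Polynomial.natDegree_sum_le_of_forall_le
  intro i _
  exact le_trans (Polynomial.natDegree_C_mul_X_pow_le _ _) i.is_le

lemma natDegree_gepQ_le (p q m : ℕ) (l : GEPIdx p q m → ℂ) (k : Fin m) :
    (gepQ p q m l k).natDegree ≤ q := by
  apply Polynomial.natDegree_sum_le_of_forall_le
  intro j _
  exact le_trans (Polynomial.natDegree_C_mul_X_pow_le _ _) j.is_lt


/-- The cyclicity at any point `μ ∈ ℂ^N` of the family of Wronskians
`W = {W(P₁e^{Q₁},…,P_m e^{Q_m})}_{λ∈ℂ^N}`, regarded as a family of holomorphic functions on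
the unit disk depending holomorphically on `λ`, is at most `mp + (1/2)m(m−1)(q−1)`. -/
theorem cyclicity_wronskian_gep_le (p q m : ℕ) (hq : 1 ≤ q) (hm : 1 ≤ m)
    (μ : GEPIdx p q m → ℂ) (κ : ℕ)
    (h : HasCyclicity 1 (Set.univ : Set (GEPIdx p q m → ℂ))
      (fun l => wronskian (fun k : Fin m => fun w =>
        (gepP p q m l k).eval w * Complex.exp ((gepQ p q m l k).eval w)))
      {μ} κ) :
    κ ≤ m * p + m * (m - 1) * (q - 1) / 2 := by
  classical
  obtain ⟨ε₀, hε₀, δ₀, hδ₀, hδρ, hA, hB⟩ := h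
  obtain ⟨l, hl, hEx⟩ := hB (ε₀ / 2) ⟨by positivity, by linarith⟩
    (δ₀ / 2) ⟨by positivity, by linarith⟩
  obtain ⟨hl1, hl2⟩ := hl
  obtain ⟨_, S, hSsub, hSsum⟩ := hEx
  -- the function is not identically zero on the unit disk
  have hnc : ∃ z₀ ∈ Metric.ball (0 : ℂ) 1,
      wronskian (fun k : Fin m => fun w =>
        (gepP p q m l k).eval w * Complex.exp ((gepQ p q m l k).eval w)) z₀ ≠ 0 := by
    by_contra hc
    push_neg at hc
    exact hl2.2 ⟨Set.mem_univ l, hc⟩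
  obtain ⟨z₀, hz₀mem, hz₀⟩ := hnc
  set P : Fin m → ℂ[X] := gepP p q m l with hP
  set Q : Fin m → ℂ[X] := gepQ p q m l with hQ
  set T : ℂ[X] := Matrix.det (Matrix.of fun i j : Fin m => gepAux (Q j) (i : ℕ) (P j)) with hT
  set G : ℂ → ℂ := fun w => Complex.exp ((∑ k, Q k).eval w) with hG
  have hfac : ∀ z, wronskian (fun k : Fin m => fun w =>
      (P k).eval w * Complex.exp ((Q k).eval w)) z = T.eval z * G z := fun z =>
    wronskian_factor P Q z
  have hTne : T ≠ 0 := by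
    intro h0
    rw [hfac z₀, h0] at hz₀
    simp at hz₀
  have hGcd : ContDiff ℂ (⊤ : ℕ∞) G := Complex.contDiff_exp.comp (contDiff_polyEval _)
  -- each order is at most the root multiplicity of T
  have hord : ∀ z : ℂ, ordAt (wronskian (fun k : Fin m => fun w =>
      (P k).eval w * Complex.exp ((Q k).eval w))) z ≤ T.rootMultiplicity z := by
    intro z
    have hfeq : wronskian (fun k : Fin m => fun w =>
        (P k).eval w * Complex.exp ((Q k).eval w)) = fun w => T.eval w * G w := funext hfac
    rw [hfeq]
    exact ordAt_mul_le T hTne hGcd z (Complex.exp_ne_zero _)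
  -- sum the bounds
  have hsum : κ ≤ T.natDegree := by
    rw [← hSsum]
    calc ∑ z ∈ S, ordAt _ z ≤ ∑ z ∈ S, T.rootMultiplicity z := Finset.sum_le_sum
          (fun z _ => hord z)
      _ = ∑ z ∈ S, T.roots.count z := Finset.sum_congr rfl fun z _ =>
          (Polynomial.count_roots T).symm
      _ ≤ Multiset.card T.roots := sum_count_le S T.roots
      _ ≤ T.natDegree := Polynomial.card_roots' T
  -- degree bound on T
  have hdeg : T.natDegree ≤ m * p + (q - 1) * (m * (m - 1) / 2) := by
    apply natDegree_det_le _ p (q - 1)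
    intro i j
    exact natDegree_gepAux_le (P j) (Q j) p q (i : ℕ)
      (natDegree_gepP_le p q m l j) (natDegree_gepQ_le p q m l j)
  -- arithmetic
  obtain ⟨c, hc⟩ := Nat.even_mul_succ_self (m - 1)
  rw [Nat.sub_add_cancel hm] at hc
  have e1 : m * (m - 1) = 2 * c := by rw [mul_comm]; omega
  have e2 : (q - 1) * (m * (m - 1) / 2) = c * (q - 1) := by
    rw [e1, Nat.mul_div_cancel_left c (by norm_num), mul_comm]
  have e3 : m * (m - 1) * (q - 1) / 2 = c * (q - 1) := by
    rw [e1, mul_assoc, Nat.mul_div_cancel_left _ (by norm_num)]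
  rw [e3]
  rw [e2] at hdeg
  exact le_trans hsum hdeg
end

section
/- Let ψ : ℂ^N → ℂ^N be the polynomial map sending each coordinate c_{ki} to c_{ki}^{i+1} (0 ≤ i ≤ p, 1 ≤ k ≤ m) and each coordinate d_{kj} to d_{kj}^{j} (1 ≤ j ≤ q, 1 ≤ k ≤ m). Then the Maclaurin coefficients of the family of generalized exponential polynomials satisfy a_n(ψ(z·λ)) = z^{n+1} · a_n(ψ(λ)) for all n ≥ 0, all z ∈ ℂ and all λ ∈ ℂ^N, where z·λ denotes scalar multiplication of the vector λ by z. -/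
/-- The polynomial map `ψ : ℂ^N → ℂ^N` sending each coordinate `c_{ki}` to `c_{ki}^{i+1}`
and each coordinate `d_{kj}` to `d_{kj}^j`. -/
def gepPsi (p q m : ℕ) (l : GEPIdx p q m → ℂ) : GEPIdx p q m → ℂ
  | Sum.inl (k, i) => l (Sum.inl (k, i)) ^ ((i : ℕ) + 1)
  | Sum.inr (k, j) => l (Sum.inr (k, j)) ^ ((j : ℕ) + 1)

lemma contDiff_polyEval_s9 (P : Polynomial ℂ) : ContDiff ℂ ⊤ fun x : ℂ => P.eval x := by
  induction P using Polynomial.induction_on' with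
  | add p q hp hq => simpa [Polynomial.eval_add] using hp.add hq
  | monomial n a =>
    simpa [Polynomial.eval_monomial] using (contDiff_const (c := a)).mul (contDiff_id.pow n)

lemma contDiff_gep (p q m : ℕ) (l : GEPIdx p q m → ℂ) : ContDiff ℂ ⊤ (gep p q m l) := by
  unfold gep
  exact ContDiff.sum fun k _ =>
    (contDiff_polyEval_s9 _).mul (Complex.contDiff_exp.comp (contDiff_polyEval_s9 _))

lemma iteratedDeriv_const_mul_fun {n : ℕ} {f : ℂ → ℂ} (h : ContDiff ℂ n f) (c : ℂ) (x : ℂ) :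
    iteratedDeriv n (fun y => c * f y) x = c * iteratedDeriv n f x := by
  have : (fun y => c * f y) = c • f := by funext y; simp [Pi.smul_apply]
  rw [this, iteratedDeriv, iteratedDeriv, iteratedFDeriv_const_smul_apply h.contDiffAt]
  simp

/-- The Maclaurin coefficients of the family of generalized exponential polynomials satisfy
`a_n(ψ(z·λ)) = z^{n+1} · a_n(ψ(λ))` for all `n ≥ 0`, `z ∈ ℂ` and `λ ∈ ℂ^N`. -/
theorem gepCoeff_psi_smul (p q m : ℕ) (hq : 1 ≤ q) (hm : 1 ≤ m)
    (n : ℕ) (z : ℂ) (l : GEPIdx p q m → ℂ) :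
    gepCoeff p q m n (gepPsi p q m (z • l)) = z ^ (n + 1) * gepCoeff p q m n (gepPsi p q m l) := by
  set f := gep p q m (gepPsi p q m l) with hf
  have key : gep p q m (gepPsi p q m (z • l)) = fun w => z * f (z * w) := by
    funext w
    simp only [hf, gep, gepP, gepQ, gepPsi, Pi.smul_apply, smul_eq_mul,
      Polynomial.eval_finset_sum, Polynomial.eval_mul, Polynomial.eval_C, Polynomial.eval_pow,
      Polynomial.eval_X, Finset.mul_sum]
    refine Finset.sum_congr rfl fun k _ => ?_
    have hQ : ∑ j : Fin q, (z * l (Sum.inr (k, j))) ^ ((j : ℕ) + 1) * w ^ ((j : ℕ) + 1)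
        = ∑ j : Fin q, l (Sum.inr (k, j)) ^ ((j : ℕ) + 1) * (z * w) ^ ((j : ℕ) + 1) :=
      Finset.sum_congr rfl fun j _ => by ring
    have hP : ∑ i : Fin (p + 1), (z * l (Sum.inl (k, i))) ^ ((i : ℕ) + 1) * w ^ (i : ℕ)
        = z * ∑ i : Fin (p + 1), l (Sum.inl (k, i)) ^ ((i : ℕ) + 1) * (z * w) ^ (i : ℕ) := by
      rw [Finset.mul_sum]
      exact Finset.sum_congr rfl fun i _ => by ring
    rw [hQ, hP, mul_assoc]
  have hcf : ContDiff ℂ (n : ℕ∞) f := (contDiff_gep p q m _).of_le le_top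
  have hcg : ContDiff ℂ (n : ℕ∞) (fun y => z * f y) := contDiff_const.mul hcf
  rw [gepCoeff, gepCoeff, key]
  have h1 : iteratedDeriv n (fun w => z * f (z * w)) 0
      = z ^ n * iteratedDeriv n (fun y => z * f y) (z * 0) := by
    rw [iteratedDeriv_comp_const_mul hcg z]
  rw [h1, mul_zero, iteratedDeriv_const_mul_fun hcf z 0]
  rw [pow_succ]
  ring
end
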